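/- Let v : Fin 5 → ℙ(K^4) satisfy π(v)(I) = min(|I|, 2) for every I ⊆ Fin 5. Then there exist scalars p_0, p_1, q_0, q_1 ∈ K with p_0 p_1 (p_0 − p_1) ≠ 0, q_0 q_1 (q_0 − q_1) ≠ 0, and p_0 q_1 − p_1 q_0 ≠ 0, and a linear automorphism g of K^4 such that v_0 = g[e_0], v_1 = g[e_1], v_2 = g[e_0 + e_1], v_3 = g[p_0 e_0 + p_1 e_1], and v_4 = g[q_0 e_0 + q_1 e_1]. -/

import Mathlib

open scoped LinearAlgebra.Projectivization

/-- The subspace of `Fin n → K` spanned by the lines `v i` for `i ∈ I`. -/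
noncomputable def spanV {K : Type*} [Field K] {n m : ℕ}
    (v : Fin m → ℙ K (Fin n → K)) (I : Finset (Fin m)) : Submodule K (Fin n → K) :=
  ⨆ i ∈ I, (v i).submodule

/-- The rank matrix of a tuple of points in projective space. -/
noncomputable def rankMatrix {K : Type*} [Field K] {n m : ℕ}
    (v : Fin m → ℙ K (Fin n → K)) (I : Finset (Fin m)) : ℕ :=
  Module.finrank K (spanV v I)

lemma ne_zero_of_apply_ne_zero {K : Type*} [Field K] {n : ℕ} {u : Fin n → K} {i : Fin n}
    (h : u i ≠ 0) : u ≠ 0 := fun h0 => h (by rw [h0]; rfl)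

section Aux

variable {K : Type*} [Field K] {n m : ℕ}

lemma spanV_pair (v : Fin m → ℙ K (Fin n → K)) (i j : Fin m) :
    spanV v {i, j} = (v i).submodule ⊔ (v j).submodule := by
  rw [spanV, ← Finset.sup_eq_iSup]
  simp

lemma spanV_triple (v : Fin m → ℙ K (Fin n → K)) (i j k : Fin m) :
    spanV v {i, j, k} = ((v i).submodule ⊔ (v j).submodule) ⊔ (v k).submodule := by
  rw [spanV, ← Finset.sup_eq_iSup]
  simp [sup_assoc]

/-- Extend a linearly independent pair to a basis of `Fin 4 → K`. -/
lemma exists_basis_pair {w0 w1 : Fin 4 → K} (hli : LinearIndependent K ![w0, w1]) :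
    ∃ b : Module.Basis (Fin 4) K (Fin 4 → K), b 0 = w0 ∧ b 1 = w1 := by
  classical
  let b0 := Module.Basis.sumExtend hli
  have hb0 : ∀ i : Fin 2, b0 (Sum.inl i) = ![w0, w1] i := by
    intro i
    simp [b0, Module.Basis.sumExtend, Trans.trans, Equiv.sumCongr, Equiv.Set.sumDiffSubset_apply_inl]
    rfl
  haveI : Fintype (Module.Basis.sumExtendIndex hli) := by
    have F : Fintype (Fin 2 ⊕ Module.Basis.sumExtendIndex hli) := FiniteDimensional.fintypeBasisIndex b0
    exact @Fintype.ofInjective _ _ F (Sum.inr : _ → Fin 2 ⊕ Module.Basis.sumExtendIndex hli)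
      Sum.inr_injective
  have hcard : Fintype.card (Fin 2 ⊕ Module.Basis.sumExtendIndex hli) = 4 := by
    rw [← Module.finrank_eq_card_basis b0, Module.finrank_fin_fun]
  have hcard' : Fintype.card (Module.Basis.sumExtendIndex hli) = 2 := by
    rw [Fintype.card_sum, Fintype.card_fin] at hcard; omega
  let e : Module.Basis.sumExtendIndex hli ≃ Fin 2 :=
    Fintype.equivFinOfCardEq hcard'
  let E : (Fin 2 ⊕ Module.Basis.sumExtendIndex hli) ≃ Fin 4 :=
    (Equiv.sumCongr (Equiv.refl (Fin 2)) e).trans finSumFinEquiv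
  refine ⟨b0.reindex E, ?_, ?_⟩
  · have h0 : E.symm 0 = Sum.inl 0 := by
      rw [Equiv.symm_apply_eq]; rfl
    rw [Module.Basis.reindex_apply, h0]
    simpa using hb0 0
  · have h1 : E.symm 1 = Sum.inl 1 := by
      rw [Equiv.symm_apply_eq]; rfl
    rw [Module.Basis.reindex_apply, h1]
    simpa using hb0 1

end Aux

/-- normal form for quintuples of rank type (5). -/
theorem rank_5_normal_form (K : Type*) [Field K] [IsAlgClosed K] [CharZero K]
    (v : Fin 5 → ℙ K (Fin 4 → K))
    (h : ∀ I : Finset (Fin 5), rankMatrix v I = min I.card 2) :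
    ∃ p₀ p₁ q₀ q₁ : K,
      ∃ hp : p₀ * p₁ * (p₀ - p₁) ≠ 0, ∃ hq : q₀ * q₁ * (q₀ - q₁) ≠ 0,
      ∃ hpq : p₀ * q₁ - p₁ * q₀ ≠ 0,
      ∃ g : (Fin 4 → K) ≃ₗ[K] (Fin 4 → K),
        v 0 = Projectivization.mk K (g ![1,0,0,0])
            (g.map_ne_zero_iff.mpr (ne_zero_of_apply_ne_zero (i := 0) (by norm_num))) ∧
        v 1 = Projectivization.mk K (g ![0,1,0,0])
            (g.map_ne_zero_iff.mpr (ne_zero_of_apply_ne_zero (i := 1) (by norm_num))) ∧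
        v 2 = Projectivization.mk K (g ![1,1,0,0])
            (g.map_ne_zero_iff.mpr (ne_zero_of_apply_ne_zero (i := 0) (by norm_num))) ∧
        v 3 = Projectivization.mk K (g ![p₀,p₁,0,0])
            (g.map_ne_zero_iff.mpr (ne_zero_of_apply_ne_zero (i := 0) (by
              simpa using left_ne_zero_of_mul (left_ne_zero_of_mul hp)))) ∧
        v 4 = Projectivization.mk K (g ![q₀,q₁,0,0])
            (g.map_ne_zero_iff.mpr (ne_zero_of_apply_ne_zero (i := 0) (by
              simpa using left_ne_zero_of_mul (left_ne_zero_of_mul hq)))) := by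
  classical
  -- distinctness of the points
  have hne : ∀ i j : Fin 5, i ≠ j → v i ≠ v j := by
    intro i j hij he
    have h2 := h {i, j}
    rw [Finset.card_insert_of_notMem (by simpa using hij), Finset.card_singleton] at h2
    rw [rankMatrix, spanV_pair, he, sup_idem, (v j).finrank_submodule] at h2
    omega
  have hrne : ∀ i, (v i).rep ≠ 0 := fun i => (v i).rep_nonzero
  have hsub : ∀ i, (v i).submodule = K ∙ (v i).rep := fun i => (v i).submodule_eq
  have hS2 : Module.finrank K ((K ∙ (v 0).rep) ⊔ (K ∙ (v 1).rep) : Submodule K (Fin 4 → K))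
      = 2 := by
    have h01 := h {0, 1}
    rw [rankMatrix, spanV_pair, hsub 0, hsub 1] at h01
    simpa using h01
  -- every rep lies in the span of the first two
  have key : ∀ j : Fin 5, j ≠ 0 → j ≠ 1 →
      (v j).rep ∈ ((K ∙ (v 0).rep) ⊔ (K ∙ (v 1).rep) : Submodule K (Fin 4 → K)) := by
    intro j hj0 hj1
    have hcard : ({0, 1, j} : Finset (Fin 5)).card = 3 := by
      rw [Finset.card_insert_of_notMem (by simp [hj0.symm]),
        Finset.card_insert_of_notMem (by simp [hj1.symm]), Finset.card_singleton]
    have h3 := h {0, 1, j}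
    rw [hcard, rankMatrix, spanV_triple, hsub 0, hsub 1] at h3
    have heq : ((K ∙ (v 0).rep) ⊔ (K ∙ (v 1).rep) : Submodule K (Fin 4 → K))
        = ((K ∙ (v 0).rep) ⊔ (K ∙ (v 1).rep)) ⊔ (v j).submodule := by
      refine Submodule.eq_of_le_of_finrank_eq le_sup_left ?_
      rw [hS2, h3]; rfl
    have : (v j).rep ∈ ((K ∙ (v 0).rep) ⊔ (K ∙ (v 1).rep)) ⊔ (v j).submodule :=
      Submodule.mem_sup_right (by rw [hsub j]; exact Submodule.mem_span_singleton_self _)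
    rwa [← heq] at this
  have coeffs : ∀ j : Fin 5, j ≠ 0 → j ≠ 1 →
      ∃ a b : K, (v j).rep = a • (v 0).rep + b • (v 1).rep := by
    intro j hj0 hj1
    obtain ⟨y, hy, z, hz, hyz⟩ := Submodule.mem_sup.mp (key j hj0 hj1)
    obtain ⟨a, ha⟩ := Submodule.mem_span_singleton.mp hy
    obtain ⟨b, hb⟩ := Submodule.mem_span_singleton.mp hz
    exact ⟨a, b, by rw [← hyz, ha, hb]⟩
  -- helper to show equality of points in projective space
  have mk_eq : ∀ (i j : Fin 5) (c : K), c ≠ 0 → (v i).rep = c • (v j).rep → v i = v j := by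
    intro i j c hc hrij
    rw [← (v i).mk_rep, ← (v j).mk_rep]
    exact (Projectivization.mk_eq_mk_iff' K _ _ _ _).2 ⟨c, hrij.symm⟩
  have coeff_ne : ∀ (j : Fin 5) (a b : K), j ≠ 0 → j ≠ 1 →
      (v j).rep = a • (v 0).rep + b • (v 1).rep → a ≠ 0 ∧ b ≠ 0 := by
    intro j a b hj0 hj1 hrj
    constructor
    · intro ha
      have hb : b ≠ 0 := by
        intro hb; exact hrne j (by rw [hrj, ha, hb]; simp)
      exact hne j 1 hj1 (mk_eq j 1 b hb (by rw [hrj, ha]; simp))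
    · intro hb
      have ha : a ≠ 0 := by
        intro ha; exact hrne j (by rw [hrj, ha, hb]; simp)
      exact hne j 0 hj0 (mk_eq j 0 a ha (by rw [hrj, hb]; simp))
  obtain ⟨a2, b2, hr2⟩ := coeffs 2 (by decide) (by decide)
  obtain ⟨a3, b3, hr3⟩ := coeffs 3 (by decide) (by decide)
  obtain ⟨a4, b4, hr4⟩ := coeffs 4 (by decide) (by decide)
  obtain ⟨ha2, hb2⟩ := coeff_ne 2 a2 b2 (by decide) (by decide) hr2
  obtain ⟨ha3, hb3⟩ := coeff_ne 3 a3 b3 (by decide) (by decide) hr3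
  obtain ⟨ha4, hb4⟩ := coeff_ne 4 a4 b4 (by decide) (by decide) hr4
  have hp0 : a3 / a2 ≠ 0 := div_ne_zero ha3 ha2
  have hp1 : b3 / b2 ≠ 0 := div_ne_zero hb3 hb2
  have hq0 : a4 / a2 ≠ 0 := div_ne_zero ha4 ha2
  have hq1 : b4 / b2 ≠ 0 := div_ne_zero hb4 hb2
  have hpne : a3 / a2 ≠ b3 / b2 := by
    intro heq
    refine hne 3 2 (by decide) (mk_eq 3 2 (a3 / a2) hp0 ?_)
    have heq' : a3 * b2 = b3 * a2 := by
      field_simp at heq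
      linear_combination heq
    rw [hr3, hr2]
    match_scalars
    · field_simp
    · field_simp
      linear_combination -heq'
  have hqne : a4 / a2 ≠ b4 / b2 := by
    intro heq
    refine hne 4 2 (by decide) (mk_eq 4 2 (a4 / a2) hq0 ?_)
    have heq' : a4 * b2 = b4 * a2 := by
      field_simp at heq
      linear_combination heq
    rw [hr4, hr2]
    match_scalars
    · field_simp
    · field_simp
      linear_combination -heq'
  have hdet : a3 / a2 * (b4 / b2) - b3 / b2 * (a4 / a2) ≠ 0 := by
    intro heq
    refine hne 4 3 (by decide) (mk_eq 4 3 (a4 / a3) (div_ne_zero ha4 ha3) ?_)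
    have heq' : a3 * b4 = b3 * a4 := by
      field_simp at heq
      apply mul_right_cancel₀ (mul_ne_zero hb2 ha2)
      linear_combination (b2 * a2) * heq
    rw [hr4, hr3]
    match_scalars
    · field_simp
    · field_simp
      linear_combination heq'
  -- linear independence of the scaled pair
  have hspan : Submodule.span K (Set.range ![a2 • (v 0).rep, b2 • (v 1).rep])
      = ((K ∙ (v 0).rep) ⊔ (K ∙ (v 1).rep) : Submodule K (Fin 4 → K)) := by
    have hr : Set.range ![a2 • (v 0).rep, b2 • (v 1).rep]
        = {a2 • (v 0).rep, b2 • (v 1).rep} := by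
      ext x
      simp [Matrix.range_cons, Matrix.range_empty]
      tauto
    rw [hr, ← Set.singleton_union, Submodule.span_union,
      Submodule.span_singleton_smul_eq (Ne.isUnit ha2),
      Submodule.span_singleton_smul_eq (Ne.isUnit hb2)]
  have hli : LinearIndependent K ![a2 • (v 0).rep, b2 • (v 1).rep] := by
    rw [linearIndependent_iff_card_eq_finrank_span]
    rw [Set.finrank, hspan, hS2]
    simp
  obtain ⟨b, hb0', hb1'⟩ := exists_basis_pair hli
  have hgv : ∀ c d : K, ((Pi.basisFun K (Fin 4)).equiv b (Equiv.refl _)) ![c, d, 0, 0]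
      = (c * a2) • (v 0).rep + (d * b2) • (v 1).rep := by
    intro c d
    have hx : ![c, d, 0, 0] =
        c • (Pi.basisFun K (Fin 4)) 0 + d • (Pi.basisFun K (Fin 4)) 1 := by
      funext i; fin_cases i <;> simp
    rw [hx, map_add, map_smul, map_smul, Module.Basis.equiv_apply, Module.Basis.equiv_apply]
    simp only [Equiv.refl_apply, hb0', hb1']
    module
  refine ⟨a3 / a2, b3 / b2, a4 / a2, b4 / b2,
    mul_ne_zero (mul_ne_zero hp0 hp1) (sub_ne_zero.mpr hpne),
    mul_ne_zero (mul_ne_zero hq0 hq1) (sub_ne_zero.mpr hqne),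
    hdet, (Pi.basisFun K (Fin 4)).equiv b (Equiv.refl _), ?_, ?_, ?_, ?_, ?_⟩
  · rw [← (v 0).mk_rep]
    exact (Projectivization.mk_eq_mk_iff' K _ _ _ _).2
      ⟨a2⁻¹, by rw [hgv]; match_scalars <;> field_simp <;> ring⟩
  · rw [← (v 1).mk_rep]
    exact (Projectivization.mk_eq_mk_iff' K _ _ _ _).2
      ⟨b2⁻¹, by rw [hgv]; match_scalars <;> field_simp <;> ring⟩
  · rw [← (v 2).mk_rep]
    exact (Projectivization.mk_eq_mk_iff' K _ _ _ _).2
      ⟨1, by rw [hgv, hr2, one_smul]; module⟩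
  · rw [← (v 3).mk_rep]
    exact (Projectivization.mk_eq_mk_iff' K _ _ _ _).2
      ⟨1, by rw [hgv, hr3, one_smul]; match_scalars <;> field_simp⟩
  · rw [← (v 4).mk_rep]
    exact (Projectivization.mk_eq_mk_iff' K _ _ _ _).2
      ⟨1, by rw [hgv, hr4, one_smul]; match_scalars <;> field_simp⟩
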